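/- Let z : [0,∞) → ℝ be bounded and measurable and let 0 < α < β. Then ∫_0^∞ z(s) τ_β(ds) = (α/β) ∫_0^∞ z(s) τ_α(ds) + (1 − α/β) ∫_0^∞ ∫_0^∞ z(s + u) τ_β(du) τ_α(ds). -/

import Mathlib

open MeasureTheory ProbabilityTheory Filter Real Set
open scoped ENNReal

noncomputable def ePDF (r : ℝ) : ℝ → ℝ := exponentialPDFReal r

lemma ePDF_def (r x : ℝ) : ePDF r x = if 0 ≤ x then r * exp (-(r * x)) else 0 := by
  simp [ePDF, exponentialPDFReal, gammaPDFReal]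

lemma ePDF_nonneg {r : ℝ} (hr : 0 < r) (x : ℝ) : 0 ≤ ePDF r x :=
  exponentialPDFReal_nonneg hr x

lemma ePDF_meas (r : ℝ) : Measurable (ePDF r) := measurable_exponentialPDFReal r

lemma ePDF_integrable {r : ℝ} (hr : 0 < r) : Integrable (ePDF r) := by
  refine ⟨(ePDF_meas r).aestronglyMeasurable, ?_⟩
  have h : ∀ x, ‖ePDF r x‖ₑ = exponentialPDF r x := by
    intro x
    rw [exponentialPDF, ← ofReal_norm,
      Real.norm_of_nonneg (ePDF_nonneg hr x)]
    rfl
  simpa [HasFiniteIntegral, h] using (lintegral_exponentialPDF_eq_one hr).le.trans_lt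
    ENNReal.one_lt_top

lemma integral_expMeasure {r : ℝ} (hr : 0 < r) (g : ℝ → ℝ) :
    ∫ x, g x ∂(expMeasure r) = ∫ x, ePDF r x * g x := by
  have h : expMeasure r = volume.withDensity fun x => ((ePDF r x).toNNReal : ℝ≥0∞) := by
    rw [expMeasure, gammaMeasure]
    congr 1
  rw [h, integral_withDensity_eq_integral_smul ((ePDF_meas r).real_toNNReal)]
  refine integral_congr_ae (Filter.Eventually.of_forall fun x => ?_)
  simp [NNReal.smul_def, Real.coe_toNNReal _ (ePDF_nonneg hr x)]

lemma exp_int (c t : ℝ) (hc : c ≠ 0) :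
    ∫ s in (0:ℝ)..t, exp (c * s) = (exp (c * t) - 1) / c := by
  have h : ∀ x ∈ Set.uIcc (0:ℝ) t, HasDerivAt (fun s => exp (c * s) / c) (exp (c * x)) x := by
    intro x _
    have := (((hasDerivAt_id x).const_mul c).exp).div_const c
    simpa [mul_comm, mul_div_assoc, mul_div_cancel_left₀ _ hc] using this
  have hint : IntervalIntegrable (fun x => exp (c * x)) volume 0 t :=
    (Real.continuous_exp.comp (continuous_const.mul continuous_id)).intervalIntegrable 0 t
  rw [intervalIntegral.integral_eq_sub_of_hasDerivAt h hint]
  simp [Real.exp_zero]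
  ring

lemma conv_key {a b : ℝ} (hb : 0 < b) (hba : b < a) (t : ℝ) :
    (1 - b / a) * ∫ s, ePDF a s * ePDF b (t - s)
      = ePDF b t - (b / a) * ePDF a t := by
  have ha : 0 < a := hb.trans hba
  rcases lt_or_ge t 0 with ht | ht
  · have h0 : (fun s => ePDF a s * ePDF b (t - s)) = fun _ => (0:ℝ) := by
      funext s
      rcases lt_or_ge s 0 with hs | hs
      · rw [ePDF_def a s, if_neg (not_le.mpr hs), zero_mul]
      · rw [ePDF_def b (t - s), if_neg (by push_neg; linarith), mul_zero]
    rw [h0]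
    simp [ePDF_def, ht.not_ge]
  · have hcne : b - a ≠ 0 := by intro h; linarith [sub_eq_zero.mp h]
    have h0 : (fun s => ePDF a s * ePDF b (t - s))
        = Set.indicator (Icc 0 t) (fun s => a * b * exp (-(b * t)) * exp ((b - a) * s)) := by
      funext s
      by_cases hs : s ∈ Icc (0:ℝ) t
      · rw [Set.indicator_of_mem hs]
        obtain ⟨h1, h2⟩ := hs
        rw [ePDF_def, ePDF_def, if_pos h1, if_pos (by linarith)]
        have hexp : exp (-(a * s)) * exp (-(b * (t - s)))
            = exp (-(b * t)) * exp ((b - a) * s) := by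
          rw [← Real.exp_add, ← Real.exp_add]; congr 1; ring
        rw [show a * exp (-(a * s)) * (b * exp (-(b * (t - s))))
            = a * b * (exp (-(a * s)) * exp (-(b * (t - s)))) by ring, hexp]
        ring
      · rw [Set.indicator_of_notMem hs]
        simp only [Set.mem_Icc, not_and_or, not_le] at hs
        rcases hs with hs | hs
        · rw [ePDF_def a s, if_neg (not_le.mpr hs), zero_mul]
        · rw [ePDF_def b (t - s), if_neg (by push_neg; linarith), mul_zero]
    rw [h0, integral_indicator measurableSet_Icc, MeasureTheory.integral_Icc_eq_integral_Ioc,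
      ← intervalIntegral.integral_of_le ht, intervalIntegral.integral_const_mul,
      exp_int (b - a) t hcne]
    have hedge : exp (-(b * t)) * exp ((b - a) * t) = exp (-(a * t)) := by
      rw [← Real.exp_add]; congr 1; ring
    rw [ePDF_def, ePDF_def, if_pos ht, if_pos ht]
    field_simp
    have hedge' : exp (-(b * t)) * exp (t * (b - a)) = exp (-(a * t)) := by
      rw [mul_comm t]; exact hedge
    linear_combination (a - b) * hedge'

/-- A splitting identity for exponential distributions: for `0 < α < β` and bounded measurable
`z`, `∫ z dτ_β = (α/β) ∫ z dτ_α + (1 − α/β) ∫∫ z(s + u) τ_β(du) τ_α(ds)`, where `τ_λ` is the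
exponential distribution with mean `λ` (rate `λ⁻¹`). -/
theorem exponential_splitting_identity
    (α β : ℝ) (hα : 0 < α) (hαβ : α < β)
    (z : ℝ → ℝ) (hz : Measurable z) (C : ℝ) (hbd : ∀ t, |z t| ≤ C) :
    ∫ s, z s ∂(expMeasure β⁻¹)
      = (α / β) * ∫ s, z s ∂(expMeasure α⁻¹)
        + (1 - α / β) * ∫ s, (∫ u, z (s + u) ∂(expMeasure β⁻¹)) ∂(expMeasure α⁻¹) := by
  have hβ : 0 < β := hα.trans hαβ
  set a : ℝ := α⁻¹ with ha_def
  set b : ℝ := β⁻¹ with hb_def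
  have ha : 0 < a := inv_pos.mpr hα
  have hb : 0 < b := inv_pos.mpr hβ
  have hba : b < a := by
    rw [ha_def, hb_def]
    exact inv_strictAnti₀ hα hαβ
  have hratio : α / β = b / a := by
    rw [ha_def, hb_def]; field_simp
  have hC : 0 ≤ C := (abs_nonneg _).trans (hbd 0)
  have hint : ∀ r : ℝ, 0 < r → Integrable (fun t => ePDF r t * z t) := by
    intro r hr
    refine Integrable.mono' ((ePDF_integrable hr).const_mul C)
      ((ePDF_meas r).mul hz).aestronglyMeasurable
      (Filter.Eventually.of_forall fun t => ?_)
    rw [Real.norm_eq_abs, abs_mul, abs_of_nonneg (ePDF_nonneg hr t)]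
    calc ePDF r t * |z t| ≤ ePDF r t * C :=
          mul_le_mul_of_nonneg_left (hbd t) (ePDF_nonneg hr t)
      _ = C * ePDF r t := mul_comm _ _
  -- Fubini ingredients
  have hmp : MeasurePreserving (fun p : ℝ × ℝ => (p.1, p.1 + p.2))
      ((volume : Measure ℝ).prod volume) ((volume : Measure ℝ).prod volume) :=
    (MeasurePreserving.id volume).skew_product (measurable_fst.add measurable_snd)
      (Filter.Eventually.of_forall fun s => map_add_left_eq_self volume s)
  have hemb : MeasurableEmbedding (fun p : ℝ × ℝ => (p.1, p.1 + p.2)) := by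
    let e : ℝ × ℝ ≃ᵐ ℝ × ℝ :=
      { toFun := fun p => (p.1, p.1 + p.2)
        invFun := fun p => (p.1, p.2 - p.1)
        left_inv := fun p => by simp
        right_inv := fun p => by simp
        measurable_toFun := (measurable_fst.prodMk (measurable_fst.add measurable_snd))
        measurable_invFun := (measurable_fst.prodMk (measurable_snd.sub measurable_fst)) }
    have h := e.measurableEmbedding
    simpa [e, MeasurableEquiv.coe_mk] using h
  have hFcomp : Integrable (fun p : ℝ × ℝ => ePDF a p.1 * (ePDF b p.2 * z (p.1 + p.2)))
      ((volume : Measure ℝ).prod volume) := by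
    refine Integrable.mono' (((ePDF_integrable ha).mul_prod (ePDF_integrable hb)).const_mul C)
      ?_ (Filter.Eventually.of_forall fun p => ?_)
    · exact (((ePDF_meas a).comp measurable_fst).mul
        (((ePDF_meas b).comp measurable_snd).mul
          (hz.comp (measurable_fst.add measurable_snd)))).aestronglyMeasurable
    · rw [Real.norm_eq_abs, abs_mul, abs_mul, abs_of_nonneg (ePDF_nonneg ha _),
        abs_of_nonneg (ePDF_nonneg hb _)]
      calc ePDF a p.1 * (ePDF b p.2 * |z (p.1 + p.2)|)
          ≤ ePDF a p.1 * (ePDF b p.2 * C) := by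
            apply mul_le_mul_of_nonneg_left _ (ePDF_nonneg ha _)
            exact mul_le_mul_of_nonneg_left (hbd _) (ePDF_nonneg hb _)
        _ = C * (ePDF a p.1 * ePDF b p.2) := by ring
  have hF : Integrable (Function.uncurry fun s t => ePDF a s * (ePDF b (t - s) * z t))
      ((volume : Measure ℝ).prod volume) := by
    refine (hmp.integrable_comp_emb hemb).mp ?_
    have hfun : (Function.uncurry fun s t => ePDF a s * (ePDF b (t - s) * z t))
        ∘ (fun p : ℝ × ℝ => (p.1, p.1 + p.2))
        = fun p : ℝ × ℝ => ePDF a p.1 * (ePDF b p.2 * z (p.1 + p.2)) := by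
      funext p
      simp [Function.uncurry, Function.comp, add_sub_cancel_left]
    rw [hfun]
    exact hFcomp
  have hswap := integral_integral_swap hF
  -- inner substitution
  have hin : ∀ s : ℝ, ∫ u, z (s + u) ∂(expMeasure b) = ∫ t, ePDF b (t - s) * z t := by
    intro s
    rw [integral_expMeasure hb,
      ← integral_sub_right_eq_self (fun u => ePDF b u * z (s + u)) s]
    congr 1
    funext t
    simp [add_sub_cancel]
  -- the double integral term
  have E3 : ∫ s, (∫ u, z (s + u) ∂(expMeasure b)) ∂(expMeasure a)
      = ∫ t, (∫ s, ePDF a s * ePDF b (t - s)) * z t := by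
    rw [integral_expMeasure ha]
    have h1 : ∀ s : ℝ, ePDF a s * ∫ u, z (s + u) ∂(expMeasure b)
        = ∫ t, ePDF a s * (ePDF b (t - s) * z t) := by
      intro s
      rw [hin s, integral_const_mul]
    simp_rw [h1]
    rw [hswap]
    congr 1
    funext t
    rw [← integral_mul_const]
    congr 1; funext s; ring
  have h2 : ∀ t : ℝ, (1 - b / a) * ((∫ s, ePDF a s * ePDF b (t - s)) * z t)
      = ePDF b t * z t - b / a * (ePDF a t * z t) := by
    intro t
    rw [← mul_assoc, conv_key hb hba t]
    ring
  have E4 : (1 - b / a) * ∫ t, (∫ s, ePDF a s * ePDF b (t - s)) * z t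
      = (∫ x, ePDF b x * z x) - b / a * ∫ x, ePDF a x * z x := by
    rw [← integral_const_mul]
    simp_rw [h2]
    rw [integral_sub (hint b hb) ((hint a ha).const_mul (b / a)), integral_const_mul]
  rw [integral_expMeasure hb, integral_expMeasure ha, E3, hratio, E4]
  ring
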